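/- For the covariant Pauli channel Λ, the supremum over all finite ensembles {(q_i, ρ_i)} of qubit density matrices (q_i ≥ 0, Σ q_i = 1) of the Holevo quantity χ = S(Λ(Σᵢ q_i ρ_i)) − Σᵢ q_i S(Λ(ρ_i)) equals 1 − h(ξ), where ξ = (1 + p0 − p3)/2 if (p0−p3)² ≥ (2p0+2p3−1)², and ξ = p0 + p3 otherwise. -/

import Mathlib

open Matrix
open scoped ComplexOrder

noncomputable section

/-- Pauli matrix X. -/
def PX : Matrix (Fin 2) (Fin 2) ℂ := !![0, 1; 1, 0]

/-- Pauli matrix Y. -/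
def PY : Matrix (Fin 2) (Fin 2) ℂ := !![0, -Complex.I; Complex.I, 0]

/-- Pauli matrix Z. -/
def PZ : Matrix (Fin 2) (Fin 2) ℂ := !![1, 0; 0, -1]

/-- The covariant Pauli channel `Λ(ρ) = p₀ ρ + p₁ (XρX + YρY) + p₃ ZρZ`. -/
def pauliChannel (p0 p1 p3 : ℝ) (ρ : Matrix (Fin 2) (Fin 2) ℂ) : Matrix (Fin 2) (Fin 2) ℂ :=
  (p0 : ℂ) • ρ + (p1 : ℂ) • (PX * ρ * PX + PY * ρ * PY) + (p3 : ℂ) • (PZ * ρ * PZ)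

/-- The qubit state with Bloch vector `(x, y, z)`. -/
def blochState (x y z : ℝ) : Matrix (Fin 2) (Fin 2) ℂ :=
  (1 / 2 : ℂ) • ((1 : Matrix (Fin 2) (Fin 2) ℂ) + (x : ℂ) • PX + (y : ℂ) • PY + (z : ℂ) • PZ)

/-- Von Neumann entropy (base-2) of a Hermitian matrix, via its eigenvalues. -/
def vN {n : ℕ} (A : Matrix (Fin n) (Fin n) ℂ) : ℝ :=
  if h : A.IsHermitian then -∑ i, h.eigenvalues i * Real.logb 2 (h.eigenvalues i) else 0

/-- Multiset of eigenvalues (with multiplicity) of a Hermitian matrix. -/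
def eigs {n : ℕ} (A : Matrix (Fin n) (Fin n) ℂ) : Multiset ℝ :=
  if h : A.IsHermitian then Finset.univ.val.map h.eigenvalues else 0

/-- The binary entropy function `h(t) = -t log₂ t - (1-t) log₂ (1-t)`. -/
def binEnt (t : ℝ) : ℝ := -(t * Real.logb 2 t) - (1 - t) * Real.logb 2 (1 - t)

lemma binEnt_eq (t : ℝ) : binEnt t = Real.binEntropy t / Real.log 2 := by
  simp only [binEnt, Real.binEntropy, Real.logb, Real.log_inv]; ring

lemma binEnt_symm (t : ℝ) : binEnt (1 - t) = binEnt t := by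
  rw [binEnt_eq, binEnt_eq, Real.binEntropy_one_sub]

lemma binEnt_half : binEnt (1/2 : ℝ) = 1 := by
  rw [binEnt_eq]
  have : (1/2 : ℝ) = 2⁻¹ := by norm_num
  rw [this, Real.binEntropy_two_inv]
  exact div_self (Real.log_ne_zero_of_pos_of_ne_one two_pos (by norm_num))

lemma binEnt_le_binEnt {x y : ℝ} (hx : 1/2 ≤ x) (hxy : x ≤ y) (hy : y ≤ 1) :
    binEnt y ≤ binEnt x := by
  rw [binEnt_eq, binEnt_eq]
  have h2 : (0:ℝ) < Real.log 2 := Real.log_pos (by norm_num)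
  have hmono := Real.binEntropy_strictAntiOn.antitoneOn
    (a := x) (b := y) ⟨by linarith, by linarith⟩ ⟨by linarith, hy⟩ hxy
  exact div_le_div_of_nonneg_right hmono h2.le

lemma vN_two (A : Matrix (Fin 2) (Fin 2) ℂ) (h : A.IsHermitian) (ht : A.trace = 1) :
    vN A = binEnt ((1 + Real.sqrt (1 - 4 * A.det.re)) / 2) := by
  set e := h.eigenvalues with he
  have htr : A.trace = ((e 0 : ℂ) + e 1) := by
    conv_lhs => rw [h.spectral_theorem]
    rw [Unitary.conjStarAlgAut_apply]
    rw [Matrix.trace_mul_cycle]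
    rw [show (star (h.eigenvectorUnitary : Matrix (Fin 2) (Fin 2) ℂ)) *
        (h.eigenvectorUnitary : Matrix (Fin 2) (Fin 2) ℂ) = 1 from
      Matrix.UnitaryGroup.star_mul_self _]
    rw [one_mul, Matrix.trace_diagonal]
    simp [Fin.sum_univ_two]; rfl
  have hsum : e 0 + e 1 = 1 := by
    have : ((e 0 + e 1 : ℝ) : ℂ) = 1 := by push_cast; rw [← htr, ht]
    exact_mod_cast this
  have hdetC : A.det = ((e 0 * e 1 : ℝ) : ℂ) := by
    rw [h.det_eq_prod_eigenvalues]; push_cast; simp [Fin.prod_univ_two]; rfl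
  have hdet : A.det.re = e 0 * e 1 := by rw [hdetC]; simp
  have hd2 : 1 - 4 * A.det.re = (e 0 - e 1) ^ 2 := by rw [hdet]; nlinarith [hsum]
  have hsqrt : Real.sqrt (1 - 4 * A.det.re) = |e 0 - e 1| := by
    rw [hd2, Real.sqrt_sq_eq_abs]
  have hvN : vN A = binEnt (e 0) := by
    rw [vN, dif_pos h, binEnt, ← he, Fin.sum_univ_two,
      show (1 : ℝ) - e 0 = e 1 by linarith]
    ring
  rw [hvN, hsqrt]
  rcases le_or_gt (e 1) (e 0) with hle | hlt
  · rw [abs_of_nonneg (by linarith), show (1 + (e 0 - e 1)) / 2 = e 0 by linarith]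
  · rw [abs_of_neg (by linarith), show (1 + -(e 0 - e 1)) / 2 = 1 - e 0 by linarith,
      binEnt_symm]

lemma pauli_explicit (p0 p1 p3 : ℝ) (a b b' c : ℂ) :
    pauliChannel p0 p1 p3 !![a, b; b', c] =
      !![((p0 : ℂ) + p3) * a + 2 * p1 * c, ((p0 : ℂ) - p3) * b;
         ((p0 : ℂ) - p3) * b', 2 * (p1 : ℂ) * a + ((p0 : ℂ) + p3) * c] := by
  unfold pauliChannel PX PY PZ
  ext i j
  fin_cases i <;> fin_cases j <;>
    simp [Matrix.mul_apply, Fin.sum_univ_two, Complex.I_sq] <;> ring_nf <;>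
    simp [Complex.I_sq] <;> ring

lemma pauli_isHermitian {p0 p1 p3 : ℝ} {ρ : Matrix (Fin 2) (Fin 2) ℂ}
    (h : ρ.IsHermitian) : (pauliChannel p0 p1 p3 ρ).IsHermitian := by
  have hX : PX.IsHermitian := by
    ext i j; fin_cases i <;> fin_cases j <;> simp [PX, Matrix.conjTranspose_apply]
  have hY : PY.IsHermitian := by
    ext i j; fin_cases i <;> fin_cases j <;> simp [PY, Matrix.conjTranspose_apply]
  have hZ : PZ.IsHermitian := by
    ext i j; fin_cases i <;> fin_cases j <;> simp [PZ, Matrix.conjTranspose_apply]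
  have key : ∀ (M : Matrix (Fin 2) (Fin 2) ℂ), M.IsHermitian → (M * ρ * M).IsHermitian :=
    fun M hM => by
      unfold Matrix.IsHermitian at *
      rw [Matrix.conjTranspose_mul, Matrix.conjTranspose_mul, hM, h, ← mul_assoc]
  unfold pauliChannel Matrix.IsHermitian
  rw [Matrix.conjTranspose_add, Matrix.conjTranspose_add, Matrix.conjTranspose_smul,
    Matrix.conjTranspose_smul, Matrix.conjTranspose_smul, Matrix.conjTranspose_add,
    h, (key _ hX), (key _ hY), (key _ hZ)]
  simp [Complex.star_def, Complex.conj_ofReal]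

lemma density_entries (ρ : Matrix (Fin 2) (Fin 2) ℂ) (h : ρ.PosSemidef) (ht : ρ.trace = 1) :
    ∃ (a c : ℝ) (b : ℂ), ρ = !![(a : ℂ), b; (starRingEnd ℂ) b, (c : ℂ)] ∧
      0 ≤ a ∧ 0 ≤ c ∧ a + c = 1 ∧ Complex.normSq b ≤ a * c := by
  have hH := h.isHermitian
  have h00 : ((ρ 0 0).re : ℂ) = ρ 0 0 := by
    have := congrFun (congrFun hH 0) 0
    rw [Matrix.conjTranspose_apply] at this
    exact Complex.conj_eq_iff_re.mp this
  have h11 : ((ρ 1 1).re : ℂ) = ρ 1 1 := by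
    have := congrFun (congrFun hH 1) 1
    rw [Matrix.conjTranspose_apply] at this
    exact Complex.conj_eq_iff_re.mp this
  have h10 : ρ 1 0 = (starRingEnd ℂ) (ρ 0 1) := by
    have := congrFun (congrFun hH 1) 0
    rw [Matrix.conjTranspose_apply] at this
    exact this.symm
  refine ⟨(ρ 0 0).re, (ρ 1 1).re, ρ 0 1, ?_, ?_, ?_, ?_, ?_⟩
  · conv_lhs => rw [Matrix.eta_fin_two ρ]
    rw [h00, h11, h10]
  · have := h.dotProduct_mulVec_nonneg ![1, 0]
    simp [dotProduct, Matrix.mulVec, Fin.sum_univ_two] at this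
    exact (Complex.le_def.mp this).1
  · have := h.dotProduct_mulVec_nonneg ![0, 1]
    simp [dotProduct, Matrix.mulVec, Fin.sum_univ_two] at this
    exact (Complex.le_def.mp this).1
  · have : (((ρ 0 0).re + (ρ 1 1).re : ℝ) : ℂ) = 1 := by
      push_cast; rw [h00, h11, ← Matrix.trace_fin_two, ht]
    exact_mod_cast this
  · -- det nonneg via eigenvalues
    have hdet : ρ.det = ((hH.eigenvalues 0 * hH.eigenvalues 1 : ℝ) : ℂ) := by
      rw [hH.det_eq_prod_eigenvalues]; push_cast; simp [Fin.prod_univ_two]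
    have hnn : 0 ≤ ρ.det.re := by
      rw [hdet, Complex.ofReal_re]
      exact mul_nonneg (h.eigenvalues_nonneg 0) (h.eigenvalues_nonneg 1)
    rw [Matrix.det_fin_two, h10] at hnn
    have : (ρ 0 1 * (starRingEnd ℂ) (ρ 0 1)) = (Complex.normSq (ρ 0 1) : ℂ) :=
      Complex.mul_conj _
    rw [this] at hnn
    have hre : (ρ 0 0 * ρ 1 1).re = (ρ 0 0).re * (ρ 1 1).re := by
      rw [← h00, ← h11]; push_cast; simp
    simp only [Complex.sub_re, hre, Complex.ofReal_re] at hnn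
    linarith


lemma binEnt_abs (l : ℝ) : binEnt ((1+|l|)/2) = binEnt ((1+l)/2) := by
  rcases abs_cases l with ⟨h,_⟩|⟨h,_⟩
  · rw [h]
  · rw [h, show (1 + -l)/2 = 1 - (1+l)/2 by ring, binEnt_symm]

set_option maxHeartbeats 1000000 in
lemma out_bounds (p0 p1 p3 : ℝ) (h0 : 0 ≤ p0) (h1 : 0 ≤ p1) (h3 : 0 ≤ p3)
    (hsum : p0 + 2 * p1 + p3 = 1) (ρ : Matrix (Fin 2) (Fin 2) ℂ)
    (hρ : ρ.PosSemidef) (ht : ρ.trace = 1) :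
    binEnt (if (p0 - p3) ^ 2 ≥ (2 * p0 + 2 * p3 - 1) ^ 2 then (1 + p0 - p3) / 2
      else p0 + p3) ≤ vN (pauliChannel p0 p1 p3 ρ) ∧ vN (pauliChannel p0 p1 p3 ρ) ≤ 1 := by
  obtain ⟨a, c, b, hρeq, ha, hc, hac, hb⟩ := density_entries ρ hρ ht
  have hHout : (pauliChannel p0 p1 p3 ρ).IsHermitian := pauli_isHermitian hρ.isHermitian
  have hB : pauliChannel p0 p1 p3 ρ =
      !![((p0 : ℂ) + p3) * a + 2 * p1 * c, ((p0 : ℂ) - p3) * b;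
         ((p0 : ℂ) - p3) * ((starRingEnd ℂ) b), 2 * (p1 : ℂ) * a + ((p0 : ℂ) + p3) * c] := by
    rw [hρeq, pauli_explicit]
  set nb := Complex.normSq b with hnbdef
  have hnb : 0 ≤ nb := Complex.normSq_nonneg b
  have htout : (pauliChannel p0 p1 p3 ρ).trace = 1 := by
    rw [hB, Matrix.trace_fin_two_of]
    have hr : (p0 + p3) * a + 2 * p1 * c + (2 * p1 * a + (p0 + p3) * c) = 1 := by nlinarith
    exact_mod_cast hr
  have hdetC : (pauliChannel p0 p1 p3 ρ).det =
      ((((p0+p3)*a + 2*p1*c) * (2*p1*a + (p0+p3)*c) - (p0-p3)^2 * nb : ℝ) : ℂ) := by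
    rw [hB, Matrix.det_fin_two_of]
    push_cast [hnbdef, ← Complex.mul_conj]
    ring
  have hdet : (pauliChannel p0 p1 p3 ρ).det.re =
      ((p0+p3)*a + 2*p1*c) * (2*p1*a + (p0+p3)*c) - (p0-p3)^2 * nb := by
    rw [hdetC, Complex.ofReal_re]
  rw [vN_two _ hHout htout, hdet]
  have hc' : c = 1 - a := by linarith
  subst hc'
  have hp1' : p1 = (1 - p0 - p3)/2 := by linarith
  subst hp1'
  set D : ℝ := ((p0+p3)*a + 2*((1-p0-p3)/2)*(1-a)) * (2*((1-p0-p3)/2)*a + (p0+p3)*(1-a))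
      - (p0-p3)^2 * nb with hD
  have hq : 1 - 4 * D = (2*(p0+p3)-1)^2*(a-(1-a))^2 + 4*(p0-p3)^2*nb := by
    rw [hD]; ring
  have hq0 : 0 ≤ 1 - 4 * D := by rw [hq]; positivity
  have ha1 : a ≤ 1 := by linarith
  -- bound: 1 - 4D ≤ λ^2 where λ is the relevant eigenvalue of the channel
  set lam : ℝ := if (p0 - p3) ^ 2 ≥ (2 * p0 + 2 * p3 - 1) ^ 2 then p0 - p3
    else 2*(p0+p3)-1 with hlam
  have hlam1 : lam^2 ≤ 1 := by
    rw [hlam]; split <;> nlinarith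
  have hqlam : 1 - 4 * D ≤ lam^2 := by
    rw [hq, hlam]
    split
    · rename_i hif
      nlinarith [mul_le_mul_of_nonneg_right hif (sq_nonneg (a-(1-a))),
        mul_le_mul_of_nonneg_left hb (sq_nonneg (p0-p3))]
    · rename_i hif
      push_neg at hif
      nlinarith [mul_le_mul hif.le hb hnb (sq_nonneg (2*p0+2*p3-1)), sq_nonneg (a-(1-a)),
        mul_nonneg (sq_nonneg (2*(p0+p3)-1)) hnb]
  have hs0 : 0 ≤ Real.sqrt (1 - 4*D) := Real.sqrt_nonneg _
  have hslam : Real.sqrt (1 - 4*D) ≤ |lam| := by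
    rw [← Real.sqrt_sq_eq_abs]
    exact Real.sqrt_le_sqrt hqlam
  have habs1 : |lam| ≤ 1 := by
    rw [← Real.sqrt_one, ← Real.sqrt_sq_eq_abs]
    exact Real.sqrt_le_sqrt (by linarith)
  have hxi : (if (p0 - p3) ^ 2 ≥ (2 * p0 + 2 * p3 - 1) ^ 2 then (1 + p0 - p3) / 2
      else p0 + p3) = (1 + lam)/2 := by rw [hlam]; split <;> ring
  constructor
  · rw [hxi, ← binEnt_abs]
    exact binEnt_le_binEnt (by linarith) (by linarith) (by linarith [abs_nonneg lam])
  · have := binEnt_le_binEnt (le_refl (1/2 : ℝ)) (show (1:ℝ)/2 ≤ (1 + Real.sqrt (1-4*D))/2 by linarith)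
      (by linarith)
    rw [binEnt_half] at this
    exact this

lemma herm_explicit (a c : ℝ) (b : ℂ) :
    (!![(a : ℂ), b; (starRingEnd ℂ) b, (c : ℂ)] : Matrix (Fin 2) (Fin 2) ℂ).IsHermitian := by
  ext i j
  fin_cases i <;> fin_cases j <;>
    simp [Matrix.conjTranspose_apply, Complex.conj_ofReal]

lemma vN_out_explicit (p0 p1 p3 : ℝ) (hsum : p0 + 2 * p1 + p3 = 1) (a c : ℝ) (b : ℂ)
    (hac : a + c = 1) :
    vN (pauliChannel p0 p1 p3 !![(a : ℂ), b; (starRingEnd ℂ) b, (c : ℂ)]) =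
      binEnt ((1 + Real.sqrt ((2*(p0+p3)-1)^2*(a-c)^2 + 4*(p0-p3)^2*Complex.normSq b))/2) := by
  have hH := pauli_isHermitian (p0 := p0) (p1 := p1) (p3 := p3) (herm_explicit a c b)
  have hB := pauli_explicit p0 p1 p3 (a : ℂ) b ((starRingEnd ℂ) b) (c : ℂ)
  have htout : (pauliChannel p0 p1 p3 !![(a : ℂ), b; (starRingEnd ℂ) b, (c : ℂ)]).trace = 1 := by
    rw [hB, Matrix.trace_fin_two_of]
    have hr : (p0 + p3) * a + 2 * p1 * c + (2 * p1 * a + (p0 + p3) * c) = 1 := by nlinarith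
    exact_mod_cast hr
  set nb := Complex.normSq b with hnbdef
  have hdet : (pauliChannel p0 p1 p3 !![(a : ℂ), b; (starRingEnd ℂ) b, (c : ℂ)]).det.re =
      ((p0+p3)*a + 2*p1*c) * (2*p1*a + (p0+p3)*c) - (p0-p3)^2 * nb := by
    have : (pauliChannel p0 p1 p3 !![(a : ℂ), b; (starRingEnd ℂ) b, (c : ℂ)]).det =
        ((((p0+p3)*a + 2*p1*c) * (2*p1*a + (p0+p3)*c) - (p0-p3)^2 * nb : ℝ) : ℂ) := by
      rw [hB, Matrix.det_fin_two_of]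
      push_cast [hnbdef, ← Complex.mul_conj]
      ring
    rw [this, Complex.ofReal_re]
  rw [vN_two _ hH htout, hdet]
  have hc' : c = 1 - a := by linarith
  subst hc'
  have hp1' : p1 = (1 - p0 - p3)/2 := by linarith
  subst hp1'
  congr 3
  ring

lemma psd_real_smul {q : ℝ} (hq : 0 ≤ q) {ρ : Matrix (Fin 2) (Fin 2) ℂ}
    (h : ρ.PosSemidef) : ((q : ℂ) • ρ).PosSemidef := by
  constructor
  · have hH := h.isHermitian
    unfold Matrix.IsHermitian at *
    rw [Matrix.conjTranspose_smul, hH]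
    congr 1
    simp [Complex.star_def, Complex.conj_ofReal]
  · exact (h.smul (Complex.zero_le_real.mpr hq)).2

lemma psd_sum {m : ℕ} (q : Fin m → ℝ) (ρs : Fin m → Matrix (Fin 2) (Fin 2) ℂ)
    (hq : ∀ i, 0 ≤ q i) (hρ : ∀ i, (ρs i).PosSemidef) :
    (∑ i, (q i : ℂ) • ρs i).PosSemidef := by
  exact Finset.sum_induction (fun i => (q i : ℂ) • ρs i) Matrix.PosSemidef
    (fun A B hA hB => hA.add hB) Matrix.PosSemidef.zero
    (fun i _ => psd_real_smul (hq i) (hρ i))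

/-- The Holevo capacity of the covariant Pauli channel: the supremum of the Holevo
quantity `χ = S(Λ(∑ qᵢ ρᵢ)) - ∑ qᵢ S(Λ(ρᵢ))` over all finite ensembles of qubit
density matrices equals `1 - h(ξ)`, with `ξ = (1+p₀-p₃)/2` if
`(p₀-p₃)² ≥ (2p₀+2p₃-1)²` and `ξ = p₀+p₃` otherwise. -/
theorem pauliChannel_holevo_capacity (p0 p1 p3 : ℝ) (h0 : 0 ≤ p0) (h1 : 0 ≤ p1)
    (h3 : 0 ≤ p3) (hsum : p0 + 2 * p1 + p3 = 1) :
    IsLUB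
      {c : ℝ | ∃ (m : ℕ) (q : Fin m → ℝ) (ρs : Fin m → Matrix (Fin 2) (Fin 2) ℂ),
        (∀ i, 0 ≤ q i) ∧ (∑ i, q i = 1) ∧
        (∀ i, (ρs i).PosSemidef ∧ (ρs i).trace = 1) ∧
        c = vN (pauliChannel p0 p1 p3 (∑ i, (q i : ℂ) • ρs i)) -
              ∑ i, q i * vN (pauliChannel p0 p1 p3 (ρs i))}
      (1 - binEnt (if (p0 - p3) ^ 2 ≥ (2 * p0 + 2 * p3 - 1) ^ 2 then (1 + p0 - p3) / 2
                   else p0 + p3)) := by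
  constructor
  · rintro x ⟨m, q, ρs, hq, hqs, hρ, rfl⟩
    have hbar : (∑ i, (q i : ℂ) • ρs i).PosSemidef :=
      psd_sum q ρs hq (fun i => (hρ i).1)
    have htbar : (∑ i, (q i : ℂ) • ρs i).trace = 1 := by
      rw [Matrix.trace_sum]
      simp only [Matrix.trace_smul]
      calc (∑ i, (q i : ℂ) • (ρs i).trace) = ∑ i, (q i : ℂ) := by
            apply Finset.sum_congr rfl
            intro i _
            rw [(hρ i).2, smul_eq_mul, mul_one]
        _ = ((∑ i, q i : ℝ) : ℂ) := by push_cast; ring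
        _ = 1 := by rw [hqs]; norm_num
    have hub := (out_bounds p0 p1 p3 h0 h1 h3 hsum _ hbar htbar).2
    have hlb : ∀ i, q i * binEnt (if (p0 - p3) ^ 2 ≥ (2 * p0 + 2 * p3 - 1) ^ 2
          then (1 + p0 - p3) / 2 else p0 + p3) ≤ q i * vN (pauliChannel p0 p1 p3 (ρs i)) :=
      fun i => mul_le_mul_of_nonneg_left
        (out_bounds p0 p1 p3 h0 h1 h3 hsum _ (hρ i).1 (hρ i).2).1 (hq i)
    have hsum2 : ∑ i, q i * binEnt (if (p0 - p3) ^ 2 ≥ (2 * p0 + 2 * p3 - 1) ^ 2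
          then (1 + p0 - p3) / 2 else p0 + p3) =
        binEnt (if (p0 - p3) ^ 2 ≥ (2 * p0 + 2 * p3 - 1) ^ 2
          then (1 + p0 - p3) / 2 else p0 + p3) := by
      rw [← Finset.sum_mul, hqs, one_mul]
    have hle := Finset.sum_le_sum (s := Finset.univ) (fun i _ => hlb i)
    rw [hsum2] at hle
    linarith
  · intro ub hub
    apply hub
    by_cases hcase : (p0 - p3) ^ 2 ≥ (2 * p0 + 2 * p3 - 1) ^ 2
    · -- use states (I ± X)/2
      refine ⟨2, ![1/2, 1/2],
        ![!![((1/2:ℝ):ℂ), ((1/2:ℝ):ℂ); (starRingEnd ℂ) ((1/2:ℝ):ℂ), ((1/2:ℝ):ℂ)],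
          !![((1/2:ℝ):ℂ), ((-(1/2):ℝ):ℂ); (starRingEnd ℂ) ((-(1/2):ℝ):ℂ), ((1/2:ℝ):ℂ)]],
        ?_, ?_, ?_, ?_⟩
      · intro i; fin_cases i <;> norm_num
      · simp [Fin.sum_univ_two]; norm_num
      · intro i
        fin_cases i <;>
          simp only [Fin.mk_zero, Fin.mk_one, Fin.isValue, Matrix.cons_val_zero,
            Matrix.cons_val_one, Matrix.head_cons]
        · constructor
          · have key : (!![((1/2:ℝ):ℂ), ((1/2:ℝ):ℂ); (starRingEnd ℂ) ((1/2:ℝ):ℂ), ((1/2:ℝ):ℂ)])ᴴ *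
                (!![((1/2:ℝ):ℂ), ((1/2:ℝ):ℂ); (starRingEnd ℂ) ((1/2:ℝ):ℂ), ((1/2:ℝ):ℂ)]) =
                (!![((1/2:ℝ):ℂ), ((1/2:ℝ):ℂ); (starRingEnd ℂ) ((1/2:ℝ):ℂ), ((1/2:ℝ):ℂ)]) := by
              ext i j
              fin_cases i <;> fin_cases j <;>
                simp [Matrix.mul_apply, Fin.sum_univ_two, Matrix.conjTranspose_apply,
                  Complex.conj_ofReal, map_inv₀, Complex.conj_ofNat] <;> norm_num
            rw [← key]
            exact Matrix.posSemidef_conjTranspose_mul_self _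
          · rw [Matrix.trace_fin_two_of]; norm_num
        · constructor
          · have key : (!![((1/2:ℝ):ℂ), ((-(1/2):ℝ):ℂ); (starRingEnd ℂ) ((-(1/2):ℝ):ℂ), ((1/2:ℝ):ℂ)])ᴴ *
                (!![((1/2:ℝ):ℂ), ((-(1/2):ℝ):ℂ); (starRingEnd ℂ) ((-(1/2):ℝ):ℂ), ((1/2:ℝ):ℂ)]) =
                (!![((1/2:ℝ):ℂ), ((-(1/2):ℝ):ℂ); (starRingEnd ℂ) ((-(1/2):ℝ):ℂ), ((1/2:ℝ):ℂ)]) := by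
              ext i j
              fin_cases i <;> fin_cases j <;>
                simp [Matrix.mul_apply, Fin.sum_univ_two, Matrix.conjTranspose_apply,
                  Complex.conj_ofReal, map_inv₀, Complex.conj_ofNat] <;> norm_num
            rw [← key]
            exact Matrix.posSemidef_conjTranspose_mul_self _
          · rw [Matrix.trace_fin_two_of]; norm_num
      · have havg : (∑ i : Fin 2, ((![(1:ℝ)/2, 1/2] i : ℝ) : ℂ) •
            ![!![((1/2:ℝ):ℂ), ((1/2:ℝ):ℂ); (starRingEnd ℂ) ((1/2:ℝ):ℂ), ((1/2:ℝ):ℂ)],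
              !![((1/2:ℝ):ℂ), ((-(1/2):ℝ):ℂ); (starRingEnd ℂ) ((-(1/2):ℝ):ℂ), ((1/2:ℝ):ℂ)]] i) =
            !![(((1:ℝ)/2:ℝ):ℂ), ((0:ℝ):ℂ); (starRingEnd ℂ) ((0:ℝ):ℂ), (((1:ℝ)/2:ℝ):ℂ)] := by
          rw [Fin.sum_univ_two]
          ext i j
          fin_cases i <;> fin_cases j <;> simp <;> norm_num
        rw [havg, Fin.sum_univ_two]
        simp only [Matrix.cons_val_zero, Matrix.cons_val_one, Matrix.head_cons]
        rw [vN_out_explicit p0 p1 p3 hsum _ _ _ (by norm_num),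
          vN_out_explicit p0 p1 p3 hsum _ _ _ (by norm_num),
          vN_out_explicit p0 p1 p3 hsum _ _ _ (by norm_num)]
        have e1 : ((2*(p0+p3)-1)^2*((1:ℝ)/2-1/2)^2 + 4*(p0-p3)^2*Complex.normSq ((0:ℝ):ℂ)) = 0 := by
          simp [Complex.normSq_ofReal]
        have e2 : ((2*(p0+p3)-1)^2*((1:ℝ)/2-1/2)^2 + 4*(p0-p3)^2*Complex.normSq (((1:ℝ)/2:ℝ):ℂ))
            = (p0-p3)^2 := by
          simp [Complex.normSq_ofReal]; ring
        have e3 : ((2*(p0+p3)-1)^2*((1:ℝ)/2-1/2)^2 + 4*(p0-p3)^2*Complex.normSq ((-(1/2):ℝ):ℂ))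
            = (p0-p3)^2 := by
          simp [Complex.normSq_ofReal]; ring
        rw [e1, e2, e3, Real.sqrt_zero, Real.sqrt_sq_eq_abs]
        rw [show ((1:ℝ)+0)/2 = 1/2 by norm_num, binEnt_half, binEnt_abs]
        rw [if_pos hcase]
        rw [show ((1:ℝ) + (p0 - p3))/2 = (1 + p0 - p3)/2 by ring]
        ring
    · -- use states |0><0| and |1><1|
      refine ⟨2, ![1/2, 1/2],
        ![!![((1:ℝ):ℂ), ((0:ℝ):ℂ); (starRingEnd ℂ) ((0:ℝ):ℂ), ((0:ℝ):ℂ)],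
          !![((0:ℝ):ℂ), ((0:ℝ):ℂ); (starRingEnd ℂ) ((0:ℝ):ℂ), ((1:ℝ):ℂ)]],
        ?_, ?_, ?_, ?_⟩
      · intro i; fin_cases i <;> norm_num
      · simp [Fin.sum_univ_two]; norm_num
      · intro i
        fin_cases i <;>
          simp only [Fin.mk_zero, Fin.mk_one, Fin.isValue, Matrix.cons_val_zero,
            Matrix.cons_val_one, Matrix.head_cons]
        · constructor
          · have key : (!![((1:ℝ):ℂ), ((0:ℝ):ℂ); (starRingEnd ℂ) ((0:ℝ):ℂ), ((0:ℝ):ℂ)])ᴴ *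
                (!![((1:ℝ):ℂ), ((0:ℝ):ℂ); (starRingEnd ℂ) ((0:ℝ):ℂ), ((0:ℝ):ℂ)]) =
                (!![((1:ℝ):ℂ), ((0:ℝ):ℂ); (starRingEnd ℂ) ((0:ℝ):ℂ), ((0:ℝ):ℂ)]) := by
              ext i j
              fin_cases i <;> fin_cases j <;>
                simp [Matrix.mul_apply, Fin.sum_univ_two, Matrix.conjTranspose_apply,
                  Complex.conj_ofReal, map_inv₀, Complex.conj_ofNat]
            rw [← key]
            exact Matrix.posSemidef_conjTranspose_mul_self _
          · rw [Matrix.trace_fin_two_of]; norm_num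
        · constructor
          · have key : (!![((0:ℝ):ℂ), ((0:ℝ):ℂ); (starRingEnd ℂ) ((0:ℝ):ℂ), ((1:ℝ):ℂ)])ᴴ *
                (!![((0:ℝ):ℂ), ((0:ℝ):ℂ); (starRingEnd ℂ) ((0:ℝ):ℂ), ((1:ℝ):ℂ)]) =
                (!![((0:ℝ):ℂ), ((0:ℝ):ℂ); (starRingEnd ℂ) ((0:ℝ):ℂ), ((1:ℝ):ℂ)]) := by
              ext i j
              fin_cases i <;> fin_cases j <;>
                simp [Matrix.mul_apply, Fin.sum_univ_two, Matrix.conjTranspose_apply,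
                  Complex.conj_ofReal, map_inv₀, Complex.conj_ofNat]
            rw [← key]
            exact Matrix.posSemidef_conjTranspose_mul_self _
          · rw [Matrix.trace_fin_two_of]; norm_num
      · have havg : (∑ i : Fin 2, ((![(1:ℝ)/2, 1/2] i : ℝ) : ℂ) •
            ![!![((1:ℝ):ℂ), ((0:ℝ):ℂ); (starRingEnd ℂ) ((0:ℝ):ℂ), ((0:ℝ):ℂ)],
              !![((0:ℝ):ℂ), ((0:ℝ):ℂ); (starRingEnd ℂ) ((0:ℝ):ℂ), ((1:ℝ):ℂ)]] i) =
            !![(((1:ℝ)/2:ℝ):ℂ), ((0:ℝ):ℂ); (starRingEnd ℂ) ((0:ℝ):ℂ), (((1:ℝ)/2:ℝ):ℂ)] := by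
          rw [Fin.sum_univ_two]
          ext i j
          fin_cases i <;> fin_cases j <;> simp <;> norm_num
        rw [havg, Fin.sum_univ_two]
        simp only [Matrix.cons_val_zero, Matrix.cons_val_one, Matrix.head_cons]
        rw [vN_out_explicit p0 p1 p3 hsum _ _ _ (by norm_num),
          vN_out_explicit p0 p1 p3 hsum _ _ _ (by norm_num),
          vN_out_explicit p0 p1 p3 hsum _ _ _ (by norm_num)]
        have e1 : ((2*(p0+p3)-1)^2*((1:ℝ)/2-1/2)^2 + 4*(p0-p3)^2*Complex.normSq ((0:ℝ):ℂ)) = 0 := by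
          simp [Complex.normSq_ofReal]
        have e2 : ((2*(p0+p3)-1)^2*((1:ℝ)-0)^2 + 4*(p0-p3)^2*Complex.normSq ((0:ℝ):ℂ))
            = (2*(p0+p3)-1)^2 := by
          simp [Complex.normSq_ofReal]
        have e3 : ((2*(p0+p3)-1)^2*((0:ℝ)-1)^2 + 4*(p0-p3)^2*Complex.normSq ((0:ℝ):ℂ))
            = (2*(p0+p3)-1)^2 := by
          simp [Complex.normSq_ofReal]
        rw [e1, e2, e3, Real.sqrt_zero, Real.sqrt_sq_eq_abs]
        rw [show ((1:ℝ)+0)/2 = 1/2 by norm_num, binEnt_half, binEnt_abs]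
        rw [if_neg hcase]
        rw [show ((1:ℝ) + (2*(p0+p3)-1))/2 = p0 + p3 by ring]
        ring

end
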